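/- Define Ω₋₊₊(ξ) = (√3/4) - ω(ξ) + ω(ξ - √3), where ω(ξ) = ξ/(1+ξ²). Then Ω₋₊₊(ξ) = 0 if and only if ξ = 0 or ξ = √3, and Ω₋₊₊(ξ) → √3/4 as |ξ| → ∞. -/

import Mathlib

noncomputable def ω : ℝ → ℝ := fun ξ => ξ / (1 + ξ^2)

noncomputable def Ω (ξ : ℝ) : ℝ := Real.sqrt 3 / 4 - ω ξ + ω (ξ - Real.sqrt 3)

open Filter

lemma omega_tendsto_atTop : Tendsto ω atTop (nhds 0) := by
  have h1 : Tendsto (fun x : ℝ => x + x⁻¹) atTop atTop := by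
    apply tendsto_atTop_mono' _ _ tendsto_id
    filter_upwards [eventually_gt_atTop (0:ℝ)] with x hx
    simp only [id]
    nlinarith [inv_pos.mpr hx]
  have h2 : Tendsto (fun x : ℝ => (x + x⁻¹)⁻¹) atTop (nhds 0) :=
    h1.inv_tendsto_atTop
  apply h2.congr'
  filter_upwards [eventually_gt_atTop (0:ℝ)] with x hx
  have hx0 : x ≠ 0 := hx.ne'
  simp only [ω]
  have hadd : x + x⁻¹ = (1 + x^2)/x := by field_simp; ring
  rw [hadd, inv_div]

lemma omega_tendsto_atBot : Tendsto ω atBot (nhds 0) := by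
  have h : Tendsto (fun x : ℝ => -ω (-x)) atBot (nhds 0) := by
    have := (omega_tendsto_atTop.comp tendsto_neg_atBot_atTop).neg
    simpa using this
  apply h.congr
  intro x
  simp only [ω]
  rw [neg_pow]
  ring_nf

theorem bbm_Omega_zeros_and_limit :
    (∀ ξ : ℝ, Ω ξ = 0 ↔ ξ = 0 ∨ ξ = Real.sqrt 3) ∧
    Filter.Tendsto Ω Filter.atTop (nhds (Real.sqrt 3 / 4)) ∧
    Filter.Tendsto Ω Filter.atBot (nhds (Real.sqrt 3 / 4)) := by
  set s := Real.sqrt 3 with hs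
  have hs0 : (0:ℝ) < s := Real.sqrt_pos.mpr (by norm_num)
  have hs2 : s^2 = 3 := Real.sq_sqrt (by norm_num)
  refine ⟨?_, ?_, ?_⟩
  · intro ξ
    have ha : (0:ℝ) < 1 + ξ^2 := by positivity
    have hb : (0:ℝ) < 1 + (ξ - s)^2 := by positivity
    have hq : (0:ℝ) < s*ξ^2 - 3*ξ + 6*s := by
      nlinarith [sq_nonneg (2*s*ξ - 3), hs2, hs0]
    have key : Ω ξ * (4 * (1 + ξ^2) * (1 + (ξ - s)^2))
        = ξ * (ξ - s) * (s*ξ^2 - 3*ξ + 6*s) := by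
      simp only [Ω, ω, ← hs]
      field_simp
      linear_combination (s + ξ^2*s - ξ^3) * hs2
    constructor
    · intro h
      have : ξ * (ξ - s) * (s*ξ^2 - 3*ξ + 6*s) = 0 := by
        rw [← key, h, zero_mul]
      rcases mul_eq_zero.mp this with h' | h'
      · rcases mul_eq_zero.mp h' with h'' | h''
        · exact Or.inl h''
        · exact Or.inr (by linarith)
      · exact absurd h' (ne_of_gt hq)
    · intro h
      have hM : (4 * (1 + ξ^2) * (1 + (ξ - s)^2)) ≠ 0 := by positivity
      have hz : ξ * (ξ - s) * (s*ξ^2 - 3*ξ + 6*s) = 0 := by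
        rcases h with h | h <;> subst h <;> ring
      exact (mul_eq_zero.mp (key.trans hz)).resolve_right hM
  · have hshift : Tendsto (fun ξ : ℝ => ξ - s) atTop atTop :=
      tendsto_atTop_add_const_right atTop (-s) tendsto_id
    have h1 : Tendsto (fun ξ : ℝ => ω (ξ - s)) atTop (nhds 0) :=
      omega_tendsto_atTop.comp hshift
    have h2 : Tendsto (fun ξ : ℝ => s/4 - ω ξ + ω (ξ - s)) atTop (nhds (s/4 - 0 + 0)) :=
      ((tendsto_const_nhds (x := s/4)).sub omega_tendsto_atTop).add h1
    exact (by simpa using h2 : Tendsto (fun ξ : ℝ => s/4 - ω ξ + ω (ξ - s)) atTop (nhds (s/4)))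
  · have hshift : Tendsto (fun ξ : ℝ => ξ - s) atBot atBot :=
      tendsto_atBot_add_const_right atBot (-s) tendsto_id
    have h1 : Tendsto (fun ξ : ℝ => ω (ξ - s)) atBot (nhds 0) :=
      omega_tendsto_atBot.comp hshift
    have h2 : Tendsto (fun ξ : ℝ => s/4 - ω ξ + ω (ξ - s)) atBot (nhds (s/4 - 0 + 0)) :=
      ((tendsto_const_nhds (x := s/4)).sub omega_tendsto_atBot).add h1
    exact (by simpa using h2 : Tendsto (fun ξ : ℝ => s/4 - ω ξ + ω (ξ - s)) atBot (nhds (s/4)))
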